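/- For 0 < α < 1, the Green matrix g(n,j) = Φ(j) C(n,j) ∑_{a=0}^{n-j} C(n-j,a)(-1)^a/Φ(j+a) with Φ(n) = [1+α]_{n-1}/(n-1)! evaluates to g(n,j) = C(n,j)[α]_j / ((α+n-j)(α+n-j+1)⋯(α+n-1)) for 1 ≤ j ≤ n. -/

import Mathlib

/-- The rising factorial `[x]_k = x(x+1)⋯(x+k-1)`. -/
noncomputable def risingFac (x : ℝ) (k : ℕ) : ℝ := ∏ i ∈ Finset.range k, (x + i)

/-- The Green matrix `g(n,j) = Φ(j) C(n,j) ∑_{a=0}^{n-j} C(n-j,a) (-1)^a / Φ(j+a)`. -/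
noncomputable def greenG (Φ : ℕ → ℝ) (n j : ℕ) : ℝ :=
  Φ j * (n.choose j : ℝ) *
    ∑ a ∈ Finset.range (n - j + 1), ((n - j).choose a : ℝ) * (-1 : ℝ) ^ a / Φ (j + a)

lemma rf_pos (x : ℝ) (hx : 0 < x) (k : ℕ) : 0 < risingFac x k := by
  apply Finset.prod_pos
  intro i _
  positivity

lemma rf_succ (x : ℝ) (k : ℕ) : risingFac x (k+1) = risingFac x k * (x + k) :=
  Finset.prod_range_succ _ _

lemma rf_succ' (x : ℝ) (k : ℕ) : risingFac x (k+1) = x * risingFac (x+1) k := by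
  unfold risingFac
  rw [Finset.prod_range_succ']
  simp only [Nat.cast_zero, add_zero, Nat.cast_add, Nat.cast_one]
  rw [mul_comm]
  congr 1
  apply Finset.prod_congr rfl
  intro i _
  ring

lemma alt_sum_succ (f : ℕ → ℝ) (m : ℕ) :
    ∑ a ∈ Finset.range (m+2), ((m+1).choose a : ℝ) * (-1)^a * f a
    = ∑ a ∈ Finset.range (m+1), (m.choose a : ℝ) * (-1)^a * f a
      - ∑ a ∈ Finset.range (m+1), (m.choose a : ℝ) * (-1)^a * f (a+1) := by
  have expand : ∀ a : ℕ, (((m+1).choose (a+1) : ℝ)) * (-1)^(a+1) * f (a+1)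
      = (m.choose a : ℝ)*(-1)^(a+1)*f (a+1) + (m.choose (a+1) : ℝ)*(-1)^(a+1)*f (a+1) := by
    intro a; rw [Nat.choose_succ_succ]; push_cast; ring
  rw [Finset.sum_range_succ' (fun a => ((m+1).choose a : ℝ) * (-1)^a * f a) (m+1)]
  simp only [expand]
  rw [Finset.sum_add_distrib]
  have hA : ∑ a ∈ Finset.range (m+1), (m.choose a : ℝ)*(-1)^(a+1)*f (a+1)
      = - ∑ a ∈ Finset.range (m+1), (m.choose a : ℝ)*(-1)^a*f (a+1) := by
    rw [← Finset.sum_neg_distrib]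
    apply Finset.sum_congr rfl
    intro a _; ring
  have hB : ∑ a ∈ Finset.range (m+1), (m.choose (a+1) : ℝ)*(-1)^(a+1)*f (a+1)
      = ∑ a ∈ Finset.range m, (m.choose (a+1) : ℝ)*(-1)^(a+1)*f (a+1) := by
    rw [Finset.sum_range_succ, Nat.choose_succ_self]
    simp
  have hC : ∑ a ∈ Finset.range (m+1), (m.choose a:ℝ)*(-1)^a*f a
      = ∑ a ∈ Finset.range m, (m.choose (a+1) : ℝ)*(-1)^(a+1)*f (a+1)
        + (m.choose 0:ℝ)*(-1)^0*f 0 :=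
    Finset.sum_range_succ' _ m
  rw [hA, hB, hC]
  simp only [Nat.choose_zero_right, Nat.cast_one, pow_zero, one_mul]
  ring

lemma key (α : ℝ) (hα : 0 < α) (m : ℕ) : ∀ k : ℕ,
    ∑ a ∈ Finset.range (m+1), (m.choose a : ℝ) * (-1)^a *
      (((k+a).factorial : ℝ) / risingFac (1+α) (k+a))
    = α * (k.factorial : ℝ) / risingFac (α + m) (k+1) := by
  induction m with
  | zero =>
    intro k
    simp only [zero_add, Finset.sum_range_one, Nat.choose_self, Nat.cast_one, pow_zero, add_zero,
      Nat.cast_zero, one_mul]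
    rw [rf_succ' α k, add_comm α 1]
    have hR : risingFac (1+α) k ≠ 0 := (rf_pos _ (by positivity) _).ne'
    field_simp
  | succ m ih =>
    intro k
    have h := alt_sum_succ (fun a => ((k+a).factorial : ℝ) / risingFac (1+α) (k+a)) m
    rw [show m+1+1 = m+2 from rfl, h]
    have e2 : ∑ a ∈ Finset.range (m+1), (m.choose a : ℝ) * (-1)^a *
        (((k+(a+1)).factorial : ℝ) / risingFac (1+α) (k+(a+1)))
        = ∑ a ∈ Finset.range (m+1), (m.choose a : ℝ) * (-1)^a *
        ((((k+1)+a).factorial : ℝ) / risingFac (1+α) ((k+1)+a)) := by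
      apply Finset.sum_congr rfl
      intro a _
      rw [show k+(a+1) = (k+1)+a by omega]
    rw [e2, ih k, ih (k+1)]
    set P := risingFac (α + m) (k+1) with hPdef
    set Q := risingFac (α + (m:ℝ) + 1) (k+1) with hQdef
    have hP : (0:ℝ) < P := rf_pos _ (by positivity) _
    have hQ : (0:ℝ) < Q := rf_pos _ (by positivity) _
    have hmd : (0:ℝ) < α + m := by positivity
    have hd : (0:ℝ) < α + m + ((k:ℝ) + 1) := by positivity
    have hrel : P * (α + m + ((k:ℝ)+1)) = (α + m) * Q := by
      have h1 : risingFac (α + m) (k+2) = P * (α + m + ((k:ℝ)+1)) := by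
        rw [hPdef, rf_succ]; push_cast; ring
      have h2 : risingFac (α + m) (k+2) = (α + m) * Q := by
        rw [hQdef, ← rf_succ']
      rw [← h1, h2]
    have hRk2 : risingFac (α + m) (k+1+1) = P * (α + m + ((k:ℝ)+1)) := by
      rw [hPdef, rf_succ]; push_cast; ring
    rw [hRk2]
    have hcast : (α + ((m+1:ℕ):ℝ)) = α + (m:ℝ) + 1 := by push_cast; ring
    rw [hcast, ← hQdef]
    have step1 : α * (k.factorial:ℝ) / P - α * (((k+1).factorial : ℝ)) / (P * (α + m + ((k:ℝ)+1)))
        = α * (k.factorial:ℝ) * (α + m) / (P * (α + m + ((k:ℝ)+1))) := by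
      rw [Nat.factorial_succ]
      push_cast
      field_simp
      ring
    rw [step1, hrel]
    rw [mul_comm (α + (m:ℝ)) Q, mul_div_mul_right _ _ hmd.ne']

/-- In the `(α,α)` case, with `Φ(n) = [1+α]_{n-1}/(n-1)!`, the Green matrix is
`g(n,j) = C(n,j)[α]_j / ((α+n-j)(α+n-j+1)⋯(α+n-1))`. -/
theorem stmt17 (α : ℝ) (hα0 : 0 < α) (hα1 : α < 1)
    (Φ : ℕ → ℝ)
    (hΦ : ∀ n : ℕ, 1 ≤ n → Φ n = risingFac (1 + α) (n - 1) / ((n - 1).factorial : ℝ))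
    (n j : ℕ) (h1 : 1 ≤ j) (h2 : j ≤ n) :
    greenG Φ n j
      = (n.choose j : ℝ) * risingFac α j / risingFac (α + (n : ℝ) - j) j := by
  obtain ⟨k, rfl⟩ : ∃ k, j = k + 1 := ⟨j - 1, by omega⟩
  set m := n - (k+1) with hm
  unfold greenG
  have hsum : ∑ a ∈ Finset.range (m + 1), ((m.choose a : ℝ)) * (-1:ℝ)^a / Φ ((k+1) + a)
      = ∑ a ∈ Finset.range (m+1), (m.choose a : ℝ) * (-1)^a *
        (((k+a).factorial : ℝ) / risingFac (1+α) (k+a)) := by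
    apply Finset.sum_congr rfl
    intro a _
    rw [hΦ ((k+1)+a) (by omega), show (k+1)+a-1 = k+a by omega]
    rw [div_div_eq_mul_div, mul_div_assoc]
  rw [hsum, key α hα0 m k, hΦ (k+1) (by omega)]
  simp only [Nat.add_sub_cancel]
  have hcast : α + (n:ℝ) - ((k+1:ℕ):ℝ) = α + (m:ℝ) := by
    rw [hm]
    push_cast [Nat.cast_sub h2]
    ring
  rw [hcast]
  rw [rf_succ' α k, add_comm α 1]
  have hR : risingFac (1+α) k ≠ 0 := (rf_pos _ (by positivity) _).ne'
  have hP : risingFac (α + m) (k+1) ≠ 0 := (rf_pos _ (by positivity) _).ne'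
  have hF : ((k.factorial : ℝ)) ≠ 0 := Nat.cast_ne_zero.mpr k.factorial_ne_zero
  field_simp
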